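/- Any function of 'attention-processor' form can be re-expressed in 'ordinary-processor' form: given f₂: ℝ × ℝ → ℝ and q₂: ℝ × ℝ → ℝ, there exist functions f₁: ℝ × ℝ^K → ℝ and q₁: ℝ → ℝ^K such that for all x ∈ ℝ^K and all k, f₂(x_k, ∑_{j≠k} q₂(x_k, x_j)) = f₁(x_k, ∑_{j≠k} q₁(x_j)), provided the remaining inputs (x_j)_{j≠k} can be recovered from ∑_{j≠k} q₁(x_j); in particular one may take q₁(x) = (𝟙[x ≤ t₁],...,𝟙[x ≤ t_K]) adapted so that the multiset {x_j : j≠k} is recoverable when the x_j come from a countable domain. Formally: if the x_j range over the rationals ℚ embedded in ℝ, then there exists an injective map from finite multisets of size K−1 of rationals into ℝ^K of the form M ↦ ∑_{x∈M} q₁(x), and hence the stated re-expression holds. -/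

import Mathlib

/-- Sum of `K ^ x` over a multiset of naturals. -/
private def psum (K : ℕ) (N : Multiset ℕ) : ℕ := (N.map (K ^ ·)).sum

private lemma psum_eq_zero {K : ℕ} (hK : 0 < K) {N : Multiset ℕ} (h : psum K N = 0) :
    N = 0 := by
  by_contra hN
  obtain ⟨a, ha⟩ := Multiset.exists_mem_of_ne_zero hN
  have h1 : K ^ a ≤ psum K N :=
    Multiset.le_sum_of_mem (Multiset.mem_map_of_mem _ ha)
  have h2 : 0 < K ^ a := Nat.pow_pos hK
  omega

/-- The "tail" of a multiset of naturals: drop zeros, decrement the rest. -/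
private def mtail (N : Multiset ℕ) : Multiset ℕ :=
  (N.filter (fun a => ¬ a = 0)).map (· - 1)

private lemma psum_decomp (K : ℕ) (hK : 0 < K) (N : Multiset ℕ) :
    psum K N = N.count 0 + K * psum K (mtail N) := by
  conv_lhs => rw [← Multiset.filter_add_not (fun a => a = 0) N]
  unfold psum mtail
  rw [Multiset.map_add, Multiset.sum_add]
  congr 1
  · rw [Multiset.filter_eq', Multiset.map_replicate, Multiset.sum_replicate, pow_zero, smul_eq_mul,
      mul_one]
  · rw [Multiset.map_map]
    rw [show ((N.filter (fun a => ¬ a = 0)).map (K ^ ·)) =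
        ((N.filter (fun a => ¬ a = 0)).map (fun a => K * K ^ (a - 1))) from
      Multiset.map_congr rfl (fun a ha => by
        have h0 : ¬ a = 0 := (Multiset.mem_filter.mp ha).2
        have h1 : K ^ a = K ^ (a - 1 + 1) := by rw [Nat.sub_add_cancel (by omega)]
        rw [h1, pow_succ, mul_comm])]
    rw [Multiset.sum_map_mul_left]
    rfl

private lemma mtail_count (N : Multiset ℕ) (n : ℕ) :
    (mtail N).count n = N.count (n + 1) := by
  unfold mtail
  rw [Multiset.count_map, Multiset.filter_filter]
  have h : N.filter (fun a => n = a - 1 ∧ ¬ a = 0) = N.filter (fun a => a = n + 1) :=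
    Multiset.filter_congr (fun a _ => by constructor <;> (intro h; omega))
  rw [h, Multiset.filter_eq', Multiset.card_replicate]

private lemma mtail_reconstruct (N : Multiset ℕ) :
    N = Multiset.replicate (N.count 0) 0 + (mtail N).map (· + 1) := by
  unfold mtail
  rw [Multiset.map_map]
  have h : ((N.filter (fun a => ¬ a = 0)).map ((· + 1) ∘ (· - 1))) =
      N.filter (fun a => ¬ a = 0) := by
    rw [show ((N.filter (fun a => ¬ a = 0)).map ((· + 1) ∘ (· - 1))) =
        ((N.filter (fun a => ¬ a = 0)).map id) from
      Multiset.map_congr rfl (fun a ha => by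
        have h0 : ¬ a = 0 := (Multiset.mem_filter.mp ha).2
        simp only [Function.comp_apply, id_eq]
        omega)]
    rw [Multiset.map_id]
  rw [h, ← Multiset.filter_eq', Multiset.filter_add_not]

private lemma psum_inj {K : ℕ} (hK : 2 ≤ K) (n : ℕ) :
    ∀ (N N' : Multiset ℕ), psum K N = n → psum K N' = n →
      (∀ m, N.count m < K) → (∀ m, N'.count m < K) → N = N' := by
  induction n using Nat.strong_induction_on with
  | _ n ih =>
    intro N N' hN hN' hc hc'
    rcases Nat.eq_zero_or_pos n with h0 | hpos
    · subst h0
      rw [psum_eq_zero (by omega) hN, psum_eq_zero (by omega) hN']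
    · have e := psum_decomp K (by omega) N
      have e' := psum_decomp K (by omega) N'
      rw [hN] at e; rw [hN'] at e'
      -- counts of zero agree
      have hcz : N.count 0 = N'.count 0 := by
        have b1 := hc 0
        have b2 := hc' 0
        have m1 : n % K = N.count 0 := by
          rw [e, Nat.add_mul_mod_self_left, Nat.mod_eq_of_lt b1]
        have m2 : n % K = N'.count 0 := by
          rw [e', Nat.add_mul_mod_self_left, Nat.mod_eq_of_lt b2]
        omega
      -- tails have equal psum
      have ht : psum K (mtail N) = psum K (mtail N') := by
        have b1 := hc 0
        have b2 := hc' 0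
        -- n = c + K * t with c < K determines t
        nlinarith [e, e', hcz]
      have hd1 : psum K (mtail N) = n / K := by
        rw [e, Nat.add_mul_div_left _ _ (by omega : 0 < K),
          Nat.div_eq_of_lt (hc 0), zero_add]
      have hlt : n / K < n := Nat.div_lt_self hpos (by omega)
      have htail : mtail N = mtail N' := by
        refine ih (n / K) hlt _ _ hd1 (ht ▸ hd1) ?_ ?_
        · intro m; rw [mtail_count]; exact hc (m + 1)
        · intro m; rw [mtail_count]; exact hc' (m + 1)
      rw [mtail_reconstruct N, mtail_reconstruct N', hcz, htail]

open Classical in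
/-- The encoding function: each rational maps to the constant vector `K ^ encode x`. -/
private noncomputable def myq₁ (K : ℕ) : ℚ → (Fin K → ℝ) :=
  fun x _ => ((K ^ Encodable.encode x : ℕ) : ℝ)

private lemma myq₁_sum_apply (K : ℕ) (M : Multiset ℚ) (j : Fin K) :
    (M.map (myq₁ K)).sum j = ((M.map (fun x => K ^ Encodable.encode x)).sum : ℕ) := by
  rw [show (M.map (myq₁ K)).sum j
      = (Pi.evalAddMonoidHom (fun _ : Fin K => ℝ) j) (M.map (myq₁ K)).sum from rfl,
    AddMonoidHom.map_multiset_sum, Multiset.map_map, Nat.cast_multiset_sum, Multiset.map_map]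
  rfl

private lemma myq₁_inj {K : ℕ} (hK : 2 ≤ K) :
    ∀ M M' : Multiset ℚ, Multiset.card M = K - 1 → Multiset.card M' = K - 1 →
      (M.map (myq₁ K)).sum = (M'.map (myq₁ K)).sum → M = M' := by
  intro M M' hM hM' hsum
  have j0 : Fin K := ⟨0, by omega⟩
  have h1 := congrFun hsum j0
  rw [myq₁_sum_apply, myq₁_sum_apply] at h1
  have h2 : (M.map (fun x => K ^ Encodable.encode x)).sum
      = (M'.map (fun x => K ^ Encodable.encode x)).sum := Nat.cast_injective h1
  have h3 : psum K (M.map Encodable.encode) = psum K (M'.map Encodable.encode) := by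
    unfold psum; rw [Multiset.map_map, Multiset.map_map]; exact h2
  have h4 : M.map Encodable.encode = M'.map Encodable.encode := by
    refine psum_inj hK _ _ _ h3 rfl ?_ ?_
    · intro m
      calc (M.map Encodable.encode).count m ≤ (M.map Encodable.encode).card :=
            Multiset.count_le_card m _
        _ = K - 1 := by rw [Multiset.card_map, hM]
        _ < K := by omega
    · intro m
      calc (M'.map Encodable.encode).count m ≤ (M'.map Encodable.encode).card :=
            Multiset.count_le_card m _
        _ = K - 1 := by rw [Multiset.card_map, hM']
        _ < K := by omega
  exact Multiset.map_injective Encodable.encode_injective h4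

open Classical in
private noncomputable def myf₁ (K : ℕ) (f₂ : ℝ → ℝ → ℝ) (q₂ : ℝ → ℝ → ℝ) :
    ℝ → (Fin K → ℝ) → ℝ :=
  fun a v =>
    if h : ∃ M : Multiset ℚ, Multiset.card M = K - 1 ∧ (M.map (myq₁ K)).sum = v then
      f₂ a ((h.choose.map (fun y : ℚ => q₂ a (y : ℝ))).sum)
    else 0

/-- attention-processor form can be re-expressed in ordinary-processor form,
via an injective sum-encoding of size-(K-1) multisets of rationals. -/
theorem attention_reexpressed_as_ordinary (K : ℕ) (hK : 2 ≤ K)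
    (f₂ : ℝ → ℝ → ℝ) (q₂ : ℝ → ℝ → ℝ) :
    ∃ q₁ : ℚ → (Fin K → ℝ),
      (∀ M M' : Multiset ℚ, Multiset.card M = K - 1 → Multiset.card M' = K - 1 →
        (M.map q₁).sum = (M'.map q₁).sum → M = M') ∧
      ∃ f₁ : ℝ → (Fin K → ℝ) → ℝ,
        ∀ (x : Fin K → ℚ) (k : Fin K),
          f₂ ((x k : ℝ)) (∑ j ∈ Finset.univ.erase k, q₂ (x k) (x j)) =
          f₁ ((x k : ℝ)) (∑ j ∈ Finset.univ.erase k, q₁ (x j)) := by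
  classical
  refine ⟨myq₁ K, myq₁_inj hK, myf₁ K f₂ q₂, ?_⟩
  intro x k
  set s : Finset (Fin K) := Finset.univ.erase k with hs
  set M₀ : Multiset ℚ := s.val.map x with hM₀
  have hcard : Multiset.card M₀ = K - 1 := by
    rw [hM₀, Multiset.card_map]
    have : s.card = K - 1 := by
      rw [hs, Finset.card_erase_of_mem (Finset.mem_univ k), Finset.card_univ, Fintype.card_fin]
    exact this
  have hsum0 : (M₀.map (myq₁ K)).sum = ∑ j ∈ s, myq₁ K (x j) := by
    rw [hM₀, Multiset.map_map]; rfl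
  have hex : ∃ M : Multiset ℚ, Multiset.card M = K - 1 ∧
      (M.map (myq₁ K)).sum = ∑ j ∈ s, myq₁ K (x j) := ⟨M₀, hcard, hsum0⟩
  rw [myf₁, dif_pos hex]
  have hchoose : hex.choose = M₀ :=
    myq₁_inj hK _ _ hex.choose_spec.1 hcard (hex.choose_spec.2.trans hsum0.symm)
  rw [hchoose]
  congr 1
  rw [hM₀, Multiset.map_map]
  rfl
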